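/- In the Golub–Kahan bidiagonalization setup, for every k with 1 ≤ k ≤ n−1, the LSMR rank-k approximation to AᵀA is strictly more accurate than the LSQR one: ‖AᵀA − Q_{k+1}Q_{k+1}ᵀ(AᵀA)Q_kQ_kᵀ‖ < ‖AᵀA − Q_kQ_kᵀ(AᵀA)Q_kQ_kᵀ‖. -/

import Mathlib

open Matrix

/-- Spectral norm (largest singular value) of a real matrix. -/
noncomputable def specNorm {a b : ℕ} (M : Matrix (Fin a) (Fin b) ℝ) : ℝ :=
  ‖LinearMap.toContinuousLinearMap (Matrix.toEuclideanLin M)‖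

/-- The `j`-th largest singular value of a real matrix (`j ≥ 1`), characterized via the
Eckart–Young theorem as the minimal spectral-norm distance to matrices of rank `< j`;
it is `0` when `j` exceeds the smaller dimension. -/
noncomputable def singVal {a b : ℕ} (M : Matrix (Fin a) (Fin b) ℝ) (j : ℕ) : ℝ :=
  sInf {r : ℝ | ∃ D : Matrix (Fin a) (Fin b) ℝ, D.rank < j ∧ r = specNorm (M - D)}

/-- The matrix of the first `k` columns of `M`. -/
def colSub {a b : ℕ} (M : Matrix (Fin a) (Fin b) ℝ) (k : ℕ) (hk : k ≤ b) :
    Matrix (Fin a) (Fin k) ℝ :=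
  M.submatrix id fun j => ⟨j.1, lt_of_lt_of_le j.2 hk⟩

/-- The leading `r × c` submatrix of `M`. -/
def subUL {a b : ℕ} (M : Matrix (Fin a) (Fin b) ℝ) (r c : ℕ) (hr : r ≤ a) (hc : c ≤ b) :
    Matrix (Fin r) (Fin c) ℝ :=
  M.submatrix (fun i => ⟨i.1, lt_of_lt_of_le i.2 hr⟩) (fun j => ⟨j.1, lt_of_lt_of_le j.2 hc⟩)

lemma dot_eq_normsq {a : ℕ} (w : Fin a → ℝ) :
    w ⬝ᵥ w = ‖(WithLp.equiv 2 (Fin a → ℝ)).symm w‖ ^ 2 := by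
  rw [EuclideanSpace.norm_eq, Real.sq_sqrt (by positivity)]
  simp [dotProduct, sq]

lemma specNorm_attained {a b : ℕ} (hb : 0 < b) (M : Matrix (Fin a) (Fin b) ℝ) :
    ∃ u : Fin b → ℝ, u ⬝ᵥ u = 1 ∧ (M *ᵥ u) ⬝ᵥ (M *ᵥ u) = specNorm M ^ 2 := by
  haveI : Nonempty (Fin b) := ⟨⟨0, hb⟩⟩
  set f := LinearMap.toContinuousLinearMap (Matrix.toEuclideanLin M) with hf
  obtain ⟨x, hx, hmax⟩ := (isCompact_sphere (0 : EuclideanSpace ℝ (Fin b)) 1).exists_isMaxOn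
    (NormedSpace.sphere_nonempty.mpr one_pos.le)
    (f.continuous.norm.continuousOn)
  rw [mem_sphere_zero_iff_norm] at hx
  have hnorm : ‖f x‖ = ‖f‖ := by
    apply le_antisymm
    · simpa [hx] using f.le_opNorm x
    · apply ContinuousLinearMap.opNorm_le_bound _ (norm_nonneg _)
      intro y
      rcases eq_or_ne y 0 with rfl | hy
      · simp
      · have hyn : ‖y‖ ≠ 0 := norm_ne_zero_iff.mpr hy
        have hmem : (‖y‖⁻¹ • y) ∈ Metric.sphere (0 : EuclideanSpace ℝ (Fin b)) 1 := by
          simp [norm_smul, abs_of_nonneg (inv_nonneg.mpr (norm_nonneg y)), inv_mul_cancel₀ hyn]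
        have := hmax hmem
        
        calc ‖f y‖ = ‖y‖ * (‖y‖⁻¹ * ‖f y‖) := by field_simp
        _ ≤ ‖y‖ * ‖f x‖ := by
            apply mul_le_mul_of_nonneg_left _ (norm_nonneg _)
            simpa [norm_smul, abs_of_nonneg (inv_nonneg.mpr (norm_nonneg y))] using this
        _ = ‖f x‖ * ‖y‖ := mul_comm _ _
  refine ⟨(WithLp.equiv 2 (Fin b → ℝ)) x, ?_, ?_⟩
  · rw [dot_eq_normsq]; simp [hx]
  · rw [dot_eq_normsq]
    have : (WithLp.equiv 2 (Fin a → ℝ)).symm (M *ᵥ (WithLp.equiv 2 (Fin b → ℝ)) x) = f x := by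
      simp [hf, Matrix.toEuclideanLin_apply]
    rw [this, hnorm, specNorm]

lemma specNorm_nonneg {a b : ℕ} (M : Matrix (Fin a) (Fin b) ℝ) : 0 ≤ specNorm M :=
  norm_nonneg _

lemma specNorm_bound {a b : ℕ} (M : Matrix (Fin a) (Fin b) ℝ) (v : Fin b → ℝ) :
    (M *ᵥ v) ⬝ᵥ (M *ᵥ v) ≤ specNorm M ^ 2 * (v ⬝ᵥ v) := by
  rw [dot_eq_normsq, dot_eq_normsq, ← mul_pow]
  apply pow_le_pow_left₀ (norm_nonneg _)
  have := (LinearMap.toContinuousLinearMap (Matrix.toEuclideanLin M)).le_opNorm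
    ((WithLp.equiv 2 (Fin b → ℝ)).symm v)
  simpa [specNorm] using this

lemma specNorm_le {a b : ℕ} (M : Matrix (Fin a) (Fin b) ℝ) (c : ℝ) (hc : 0 ≤ c)
    (h : ∀ v : Fin b → ℝ, (M *ᵥ v) ⬝ᵥ (M *ᵥ v) ≤ c ^ 2 * (v ⬝ᵥ v)) :
    specNorm M ≤ c := by
  apply ContinuousLinearMap.opNorm_le_bound _ hc
  intro x
  have h2 := h ((WithLp.equiv 2 (Fin b → ℝ)) x)
  rw [dot_eq_normsq, dot_eq_normsq] at h2
  simp only [Equiv.symm_apply_apply] at h2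
  have key : ‖LinearMap.toContinuousLinearMap (Matrix.toEuclideanLin M) x‖ ^ 2
      ≤ (c * ‖x‖) ^ 2 := by
    rw [mul_pow]
    convert h2 using 2
    all_goals simp [Matrix.toEuclideanLin_apply]
  exact (pow_le_pow_iff_left₀ (norm_nonneg _) (by positivity) (by norm_num)).mp key


lemma dot_symm_vec {n : ℕ} (M : Matrix (Fin n) (Fin n) ℝ) (v w : Fin n → ℝ) :
    (M *ᵥ v) ⬝ᵥ w = v ⬝ᵥ (Mᵀ *ᵥ w) := by
  rw [Matrix.dotProduct_mulVec, Matrix.vecMul_transpose]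

lemma dot_expand {n : ℕ} (a b : Fin n → ℝ) (s : ℝ) :
    (a + s • b) ⬝ᵥ (a + s • b) = a ⬝ᵥ a + 2 * s * (a ⬝ᵥ b) + s ^ 2 * (b ⬝ᵥ b) := by
  simp only [dotProduct_add, add_dotProduct, smul_dotProduct,
    dotProduct_smul, smul_eq_mul, dotProduct_comm b a]
  ring

lemma dot_symm_vec' {n : ℕ} (M : Matrix (Fin n) (Fin n) ℝ) (v w : Fin n → ℝ) :
    v ⬝ᵥ (M *ᵥ w) = (Mᵀ *ᵥ v) ⬝ᵥ w := by
  rw [dot_symm_vec, Matrix.transpose_transpose]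

lemma dot_self_nonneg {n : ℕ} (v : Fin n → ℝ) : 0 ≤ v ⬝ᵥ v :=
  Finset.sum_nonneg fun i _ => mul_self_nonneg _


lemma mulVec_unitvec {n : ℕ} (M : Matrix (Fin n) (Fin n) ℝ) (j : Fin n) :
    M *ᵥ (fun l => if l = j then (1:ℝ) else 0) = fun i => M i j := by
  funext i; simp [Matrix.mulVec, dotProduct, mul_ite]

lemma dot_unitvec {n : ℕ} (x : Fin n → ℝ) (j : Fin n) :
    x ⬝ᵥ (fun l => if l = j then (1:ℝ) else 0) = x j := by
  simp [dotProduct, mul_ite]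

lemma unitvec_dot_self {n : ℕ} (j : Fin n) :
    (fun l => if l = j then (1:ℝ) else 0) ⬝ᵥ (fun l => if l = j then (1:ℝ) else 0) = 1 := by
  rw [dot_unitvec]; simp

set_option maxHeartbeats 2000000 in
lemma key_ineq {n : ℕ} (hn : 2 ≤ n) (T : Matrix (Fin n) (Fin n) ℝ) (hsym : Tᵀ = T)
    (hpos : ∀ i j, 0 ≤ T i j) (hdiag : ∀ i, 0 < T i i)
    (hsup : ∀ i j : Fin n, i.1 + 1 = j.1 → 0 < T i j)
    (hzero : ∀ i j : Fin n, j.1 + 2 ≤ i.1 → T i j = 0)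
    (k : ℕ) (hk1 : 1 ≤ k) (hk2 : k ≤ n - 1) :
    specNorm (T - Matrix.diagonal (fun i : Fin n => if i.1 < k + 1 then (1:ℝ) else 0) * T *
        Matrix.diagonal (fun i : Fin n => if i.1 < k then (1:ℝ) else 0)) <
      specNorm (T - Matrix.diagonal (fun i : Fin n => if i.1 < k then (1:ℝ) else 0) * T *
        Matrix.diagonal (fun i : Fin n => if i.1 < k then (1:ℝ) else 0)) := by
  have hkn : k < n := by omega
  set Dk : Matrix (Fin n) (Fin n) ℝ :=
    Matrix.diagonal (fun i : Fin n => if i.1 < k then (1:ℝ) else 0) with hDk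
  set Dk1 : Matrix (Fin n) (Fin n) ℝ :=
    Matrix.diagonal (fun i : Fin n => if i.1 < k + 1 then (1:ℝ) else 0) with hDk1
  set D' : Matrix (Fin n) (Fin n) ℝ :=
    Matrix.diagonal (fun i : Fin n => if k ≤ i.1 then (1:ℝ) else 0) with hD'
  set E2 : Matrix (Fin n) (Fin n) ℝ := T - Dk1 * T * Dk with hE2
  set E1 : Matrix (Fin n) (Fin n) ℝ := T - Dk * T * Dk with hE1
  obtain ⟨lam, hlam⟩ : ∃ lam, specNorm E2 ^ 2 = lam := ⟨_, rfl⟩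
  -- E2 = T * D'
  have hE2' : E2 = T * D' := by
    ext i j
    simp only [hE2, hD', hDk, hDk1, Matrix.sub_apply, Matrix.mul_diagonal, Matrix.diagonal_mul]
    by_cases hj : j.1 < k
    · have hj' : ¬ k ≤ j.1 := by omega
      by_cases hi : i.1 < k + 1
      · simp [hj, hj', hi]
      · have : T i j = 0 := hzero i j (by omega)
        simp [hj, hj', hi, this]
    · have hj' : k ≤ j.1 := by omega
      simp [hj, hj']
  have hD'vec : ∀ v : Fin n → ℝ, D' *ᵥ v = fun i => if k ≤ i.1 then v i else 0 := by
    intro v; funext i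
    simp [hD', mulVec_diagonal, ite_mul]
  have hE2vec : ∀ v : Fin n → ℝ, E2 *ᵥ v = T *ᵥ (D' *ᵥ v) := by
    intro v; rw [hE2', ← Matrix.mulVec_mulVec]
  -- lam is positive
  have hlampos : 0 < lam := by
    obtain ⟨j0, hj0⟩ : ∃ j0 : Fin n, j0 = ⟨n - 1, by omega⟩ := ⟨_, rfl⟩
    have hj0v : j0.1 = n - 1 := by rw [hj0]
    obtain ⟨e0, he0⟩ : ∃ e0 : Fin n → ℝ, e0 = fun l => if l = j0 then (1:ℝ) else 0 := ⟨_, rfl⟩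
    have h1 := specNorm_bound E2 e0
    rw [hlam] at h1
    have hD'e : D' *ᵥ e0 = e0 := by
      rw [hD'vec]
      funext l
      rw [he0]
      dsimp only
      by_cases hl : l = j0
      · subst hl
        have hk' : k ≤ l.1 := by omega
        simp [hk']
      · simp [hl]
    have h2 : E2 *ᵥ e0 = fun i => T i j0 := by
      rw [hE2vec, hD'e, he0, mulVec_unitvec]
    have h3 : e0 ⬝ᵥ e0 = 1 := by rw [he0]; exact unitvec_dot_self j0
    rw [h2, h3, mul_one] at h1
    have h4 : T j0 j0 * T j0 j0 ≤ (fun i => T i j0) ⬝ᵥ (fun i => T i j0) := by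
      have := Finset.single_le_sum (f := fun i : Fin n => T i j0 * T i j0)
        (fun i _ => mul_self_nonneg _) (Finset.mem_univ j0)
      simpa [dotProduct] using this
    nlinarith [hdiag j0]
  -- attainment and normalization
  obtain ⟨u0, hu0norm, hu0max⟩ := specNorm_attained (by omega : 0 < n) E2
  rw [hlam] at hu0max
  set u : Fin n → ℝ := fun i => if k ≤ i.1 then |u0 i| else 0 with hu
  have hunneg : ∀ i, 0 ≤ u i := by
    intro i; rw [hu]; dsimp only; split <;> simp [abs_nonneg]
  have huD' : D' *ᵥ u = u := by
    rw [hD'vec]; funext i; rw [hu]; dsimp only; split <;> simp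
  have hE2u_eq : E2 *ᵥ u = T *ᵥ u := by
    rw [hE2vec, huD']
  -- componentwise domination
  have hdom : ∀ i, |(E2 *ᵥ u0) i| ≤ (T *ᵥ u) i := by
    intro i
    rw [hE2vec, hD'vec]
    simp only [mulVec, dotProduct]
    calc |∑ j, T i j * (if k ≤ j.1 then u0 j else 0)|
        ≤ ∑ j, |T i j * (if k ≤ j.1 then u0 j else 0)| := Finset.abs_sum_le_sum_abs _ _
    _ ≤ ∑ j, T i j * u j := by
        apply Finset.sum_le_sum
        intro j _
        rw [abs_mul, abs_of_nonneg (hpos i j), hu]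
        dsimp only
        split <;> simp [mul_nonneg (hpos i j) (abs_nonneg _)]
  have hTu_nonneg : ∀ i, 0 ≤ (T *ᵥ u) i := by
    intro i
    simp only [mulVec, dotProduct]
    exact Finset.sum_nonneg fun j _ => mul_nonneg (hpos i j) (hunneg j)
  have hdotTu : lam ≤ (T *ᵥ u) ⬝ᵥ (T *ᵥ u) := by
    rw [← hu0max]
    simp only [dotProduct]
    apply Finset.sum_le_sum
    intro i _
    nlinarith [hdom i, abs_nonneg ((E2 *ᵥ u0) i), sq_abs ((E2 *ᵥ u0) i), hTu_nonneg i]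
  have huu_le : u ⬝ᵥ u ≤ 1 := by
    rw [← hu0norm]
    simp only [dotProduct]
    apply Finset.sum_le_sum
    intro i _
    rw [hu]; dsimp only
    split
    · simp [abs_mul_abs_self]
    · nlinarith [mul_self_nonneg (u0 i)]
  have hboundu := specNorm_bound E2 u
  rw [hlam, hE2u_eq] at hboundu
  have huu : u ⬝ᵥ u = 1 := by nlinarith
  have hTuTu : (T *ᵥ u) ⬝ᵥ (T *ᵥ u) = lam := by nlinarith
  -- eigen equation
  obtain ⟨r, hr⟩ : ∃ r : Fin n → ℝ, r = D' *ᵥ (T *ᵥ (T *ᵥ u)) - lam • u := ⟨_, rfl⟩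
  have hD'symm : D'ᵀ = D' := Matrix.diagonal_transpose _
  have hru : r ⬝ᵥ u = 0 := by
    rw [hr, sub_dotProduct, smul_dotProduct, huu, dot_symm_vec, hD'symm, huD',
      dot_symm_vec, hsym, hTuTu]
    simp
  have hE2ur : (E2 *ᵥ u) ⬝ᵥ (E2 *ᵥ r) = r ⬝ᵥ r := by
    rw [hE2u_eq, hE2vec]
    rw [dot_symm_vec' T (T *ᵥ u), hsym, dot_symm_vec' D' (T *ᵥ (T *ᵥ u)), hD'symm]
    have hDTw : (D' *ᵥ (T *ᵥ (T *ᵥ u))) = r + lam • u := by rw [hr]; abel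
    rw [hDTw, add_dotProduct, smul_dotProduct, dotProduct_comm u r, hru]
    simp
  have hreq : r = 0 := by
    by_contra hrne
    have hrrpos : 0 < r ⬝ᵥ r := by
      rcases lt_or_eq_of_le (dot_self_nonneg r) with h | h
      · exact h
      · exact absurd (dotProduct_self_eq_zero.mp h.symm) hrne
    obtain ⟨t, ht⟩ : ∃ t : ℝ, t = 1 / lam := ⟨_, rfl⟩
    have htpos : 0 < t := by rw [ht]; positivity
    have hb := specNorm_bound E2 (u + t • r)
    rw [hlam] at hb
    rw [Matrix.mulVec_add, Matrix.mulVec_smul] at hb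
    rw [dot_expand, dot_expand] at hb
    rw [hE2ur, dotProduct_comm u r, hru, hE2u_eq, hTuTu, huu] at hb
    have hEE := dot_self_nonneg (E2 *ᵥ r)
    have hkey : 2 * t * (r ⬝ᵥ r) ≤ t ^ 2 * lam * (r ⬝ᵥ r) := by nlinarith
    have ht2 : t ^ 2 * lam = t := by
      rw [ht]; field_simp
    have h3 : t ^ 2 * lam * (r ⬝ᵥ r) = t * (r ⬝ᵥ r) := by rw [ht2]
    nlinarith [mul_pos htpos hrrpos]
  have heig : ∀ i : Fin n, k ≤ i.1 → (T *ᵥ (T *ᵥ u)) i = lam * u i := by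
    intro i hi
    have h0 : D' *ᵥ (T *ᵥ (T *ᵥ u)) = lam • u := sub_eq_zero.mp (hr.symm.trans hreq)
    rw [hD'vec] at h0
    have := congrFun h0 i
    simpa [hi] using this
  -- positivity of u at index k
  have hukpos : 0 < u ⟨k, hkn⟩ := by
    rcases lt_or_eq_of_le (hunneg ⟨k, hkn⟩) with h | h
    · exact h
    · exfalso
      -- propagate zero upward
      have hstep : ∀ i : Fin n, k ≤ i.1 → ∀ hi1 : i.1 + 1 < n, u i = 0 →
          u ⟨i.1 + 1, hi1⟩ = 0 := by
        intro i hi hi1 hui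
        have he := heig i hi
        rw [hui, mul_zero] at he
        have hsum : ∑ l, T i l * (T *ᵥ u) l = 0 := by
          simpa [mulVec, dotProduct] using he
        have hall := (Finset.sum_eq_zero_iff_of_nonneg
          (fun l _ => mul_nonneg (hpos i l) (hTu_nonneg l))).mp hsum
        have h2 := hall ⟨i.1 + 1, hi1⟩ (Finset.mem_univ _)
        have hTsup : 0 < T i ⟨i.1 + 1, hi1⟩ := hsup i ⟨i.1 + 1, hi1⟩ rfl
        have h3 : (T *ᵥ u) ⟨i.1 + 1, hi1⟩ = 0 := by
          rcases mul_eq_zero.mp h2 with h | h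
          · exact absurd h (ne_of_gt hTsup)
          · exact h
        have hsum2 : ∑ l, T ⟨i.1 + 1, hi1⟩ l * u l = 0 := by
          simpa [mulVec, dotProduct] using h3
        have hall2 := (Finset.sum_eq_zero_iff_of_nonneg
          (fun l _ => mul_nonneg (hpos _ l) (hunneg l))).mp hsum2
        have h4 := hall2 ⟨i.1 + 1, hi1⟩ (Finset.mem_univ _)
        rcases mul_eq_zero.mp h4 with h | h
        · exact absurd h (ne_of_gt (hdiag _))
        · exact h
      have hind : ∀ j : ℕ, ∀ hj : k + j < n, u ⟨k + j, hj⟩ = 0 := by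
        intro j
        induction j with
        | zero => intro hj; simpa using h.symm
        | succ p ih =>
          intro hj
          have hp : k + p < n := by omega
          have := hstep ⟨k + p, hp⟩ (by simp) (by simp only [Fin.val_mk]; omega) (ih hp)
          exact this
      have huzero : u = 0 := by
        funext i
        by_cases hik : k ≤ i.1
        · have hj : k + (i.1 - k) < n := by omega
          have := hind (i.1 - k) hj
          have hieq : i = ⟨k + (i.1 - k), hj⟩ := by
            apply Fin.ext; simp; omega
          rw [hieq]
          exact this
        · rw [hu]; simp [hik]
      rw [huzero] at huu
      simp [dotProduct] at huu
  -- final perturbation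
  obtain ⟨kI, hkI⟩ : ∃ kI : Fin n, kI = ⟨k, hkn⟩ := ⟨_, rfl⟩
  obtain ⟨kM, hkM⟩ : ∃ kM : Fin n, kM = ⟨k - 1, by omega⟩ := ⟨_, rfl⟩
  have hkIv : kI.1 = k := by rw [hkI]
  have hkMv : kM.1 = k - 1 := by rw [hkM]
  obtain ⟨gam, hgam⟩ : ∃ gam : ℝ, gam = T kI kM := ⟨_, rfl⟩
  have hgampos : 0 < gam := by
    rw [hgam, show T kI kM = Tᵀ kM kI from rfl, hsym]
    exact hsup kM kI (by omega)
  obtain ⟨c, hc⟩ : ∃ c : ℝ, c = (T *ᵥ u) kI := ⟨_, rfl⟩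
  have hcpos : 0 < c := by
    rw [hc]
    have hsum : (T *ᵥ u) kI = ∑ l, T kI l * u l := by simp [mulVec, dotProduct]
    rw [hsum]
    have hterm : 0 < T kI kI * u kI := by
      apply mul_pos (hdiag kI)
      rw [hkI]; exact hukpos
    have hsl := Finset.single_le_sum (f := fun l => T kI l * u l)
      (fun l _ => mul_nonneg (hpos kI l) (hunneg l)) (Finset.mem_univ kI)
    linarith
  -- E1 action
  obtain ⟨eM, heM⟩ : ∃ eM : Fin n → ℝ, eM = fun l => if l = kM then (1:ℝ) else 0 := ⟨_, rfl⟩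
  obtain ⟨eI, heI⟩ : ∃ eI : Fin n → ℝ, eI = fun l => if l = kI then (1:ℝ) else 0 := ⟨_, rfl⟩
  have hDku : Dk *ᵥ u = 0 := by
    funext i
    rw [hDk]
    simp only [mulVec_diagonal]
    by_cases hik : i.1 < k
    · have hnk : ¬ k ≤ i.1 := by omega
      have : u i = 0 := by rw [hu]; simp [hnk]
      simp [this]
    · simp [hik]
  have hE1u : E1 *ᵥ u = T *ᵥ u := by
    rw [hE1, Matrix.sub_mulVec, ← Matrix.mulVec_mulVec, ← Matrix.mulVec_mulVec, hDku]
    simp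
  have hDke : Dk *ᵥ eM = eM := by
    funext i
    rw [hDk]
    simp only [mulVec_diagonal]
    by_cases hik : i = kM
    · subst hik
      have : i.1 < k := by omega
      simp [this]
    · rw [heM]; simp [hik]
  have hE1e : E1 *ᵥ eM = gam • eI := by
    rw [hE1, Matrix.sub_mulVec, ← Matrix.mulVec_mulVec, ← Matrix.mulVec_mulVec, hDke]
    funext i
    have hTe : T *ᵥ eM = fun j => T j kM := by rw [heM]; exact mulVec_unitvec T kM
    rw [Pi.sub_apply, hTe]
    rw [hDk]
    simp only [mulVec_diagonal, hTe]
    rw [heI]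
    by_cases hik : i.1 < k
    · have : i ≠ kI := by intro hh; rw [hh, hkIv] at hik; omega
      simp [hik, this]
    · by_cases hiI : i = kI
      · subst hiI
        simp [hik, hgam]
      · have hge : kM.1 + 2 ≤ i.1 := by
          have : i.1 ≠ k := by intro hh; exact hiI (Fin.ext (by omega))
          omega
        have : T i kM = 0 := hzero i kM hge
        simp [hik, this, hiI]
  obtain ⟨X, hX⟩ : ∃ X : ℝ, X = |gam ^ 2 - lam| := ⟨_, rfl⟩
  have hXnn : 0 ≤ X := hX ▸ abs_nonneg _
  obtain ⟨t, ht⟩ : ∃ t : ℝ, t = min 1 (gam * c / (X + 1)) := ⟨_, rfl⟩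
  have htpos : 0 < t := by
    rw [ht]
    apply lt_min one_pos
    positivity
  have htle : t * (X + 1) ≤ gam * c := by
    have h1 : t ≤ gam * c / (X + 1) := by rw [ht]; exact min_le_right _ _
    calc t * (X + 1) ≤ (gam * c / (X + 1)) * (X + 1) := by
          apply mul_le_mul_of_nonneg_right h1; linarith
    _ = gam * c := by field_simp
  -- compute norms
  have hue : u ⬝ᵥ eM = 0 := by
    rw [heM, dot_unitvec, hu]
    have : ¬ k ≤ kM.1 := by omega
    simp [this]
  have heMdot : eM ⬝ᵥ eM = 1 := by rw [heM]; exact unitvec_dot_self kM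
  have heIdot : eI ⬝ᵥ eI = 1 := by rw [heI]; exact unitvec_dot_self kI
  have hvv : (u + t • eM) ⬝ᵥ (u + t • eM) = 1 + t ^ 2 := by
    rw [dot_expand, huu, hue, heMdot]; ring
  have hE1v : E1 *ᵥ (u + t • eM) = (T *ᵥ u) + (t * gam) • eI := by
    rw [Matrix.mulVec_add, Matrix.mulVec_smul, hE1u, hE1e, smul_smul]
  have hnum : (E1 *ᵥ (u + t • eM)) ⬝ᵥ (E1 *ᵥ (u + t • eM))
      = lam + 2 * (t * gam) * c + (t * gam) ^ 2 := by
    rw [hE1v, dot_expand, hTuTu]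
    have h1 : (T *ᵥ u) ⬝ᵥ eI = c := by
      rw [heI, dot_unitvec, hc]
    rw [h1, heIdot]; ring
  have hfinal := specNorm_bound E1 (u + t • eM)
  rw [hnum, hvv] at hfinal
  have habs1 : -X ≤ gam ^ 2 - lam := by rw [hX]; exact neg_abs_le _
  have hgap : lam * (1 + t ^ 2) < lam + 2 * (t * gam) * c + (t * gam) ^ 2 := by
    have hXt : t * X ≤ gam * c - t := by nlinarith
    nlinarith [mul_pos htpos (mul_pos hgampos hcpos), mul_pos htpos htpos,
      mul_le_mul_of_nonneg_left habs1 (sq_nonneg t),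
      mul_le_mul_of_nonneg_left hXt htpos.le]
  have h1pt : (0:ℝ) < 1 + t ^ 2 := by positivity
  have hsq : lam < specNorm E1 ^ 2 :=
    (mul_lt_mul_iff_left₀ h1pt).mp (lt_of_lt_of_le hgap hfinal)
  rw [← hlam] at hsq
  exact lt_of_pow_lt_pow_left₀ 2 (specNorm_nonneg E1) hsq

lemma orth_dot {n : ℕ} (Q : Matrix (Fin n) (Fin n) ℝ) (hQ : Qᵀ * Q = 1) (v : Fin n → ℝ) :
    (Q *ᵥ v) ⬝ᵥ (Q *ᵥ v) = v ⬝ᵥ v := by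
  rw [Matrix.dotProduct_mulVec, ← Matrix.mulVec_transpose, Matrix.mulVec_mulVec, hQ,
    Matrix.one_mulVec]

lemma specNorm_conj_le {n : ℕ} (Q X : Matrix (Fin n) (Fin n) ℝ) (hQ : Qᵀ * Q = 1) :
    specNorm (Q * X * Qᵀ) ≤ specNorm X := by
  have hQQ : Q * Qᵀ = 1 := mul_eq_one_comm.mp hQ
  have hQT : (Qᵀ)ᵀ * Qᵀ = 1 := by rw [Matrix.transpose_transpose]; exact hQQ
  apply specNorm_le _ _ (specNorm_nonneg X)
  intro v
  rw [← Matrix.mulVec_mulVec, ← Matrix.mulVec_mulVec]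
  rw [orth_dot Q hQ]
  calc (X *ᵥ (Qᵀ *ᵥ v)) ⬝ᵥ (X *ᵥ (Qᵀ *ᵥ v))
      ≤ specNorm X ^ 2 * ((Qᵀ *ᵥ v) ⬝ᵥ (Qᵀ *ᵥ v)) := specNorm_bound X _
  _ = specNorm X ^ 2 * (v ⬝ᵥ v) := by rw [orth_dot Qᵀ hQT]

lemma specNorm_conj {n : ℕ} (Q X : Matrix (Fin n) (Fin n) ℝ) (hQ : Qᵀ * Q = 1) :
    specNorm (Q * X * Qᵀ) = specNorm X := by
  have hQQ : Q * Qᵀ = 1 := mul_eq_one_comm.mp hQ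
  have hQT : (Qᵀ)ᵀ * Qᵀ = 1 := by rw [Matrix.transpose_transpose]; exact hQQ
  apply le_antisymm (specNorm_conj_le Q X hQ)
  have hX : X = Qᵀ * (Q * X * Qᵀ) * (Qᵀ)ᵀ := by
    rw [Matrix.transpose_transpose]
    calc X = 1 * X * 1 := by rw [Matrix.one_mul, Matrix.mul_one]
    _ = (Qᵀ * Q) * X * (Qᵀ * Q) := by rw [hQ]
    _ = Qᵀ * (Q * X * Qᵀ) * Q := by noncomm_ring
  nth_rewrite 1 [hX]
  exact specNorm_conj_le Qᵀ _ hQT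

lemma colSub_sq {n : ℕ} (Q : Matrix (Fin n) (Fin n) ℝ) (j : ℕ) (hj : j ≤ n) :
    colSub Q j hj * (colSub Q j hj)ᵀ =
      Q * Matrix.diagonal (fun i : Fin n => if i.1 < j then (1:ℝ) else 0) * Qᵀ := by
  ext i i'
  have hentry : (Q * Matrix.diagonal (fun i : Fin n => if i.1 < j then (1:ℝ) else 0) * Qᵀ) i i'
      = ∑ x : Fin n, if x.1 < j then Q i x * Q i' x else 0 := by
    rw [Matrix.mul_apply]
    apply Finset.sum_congr rfl
    intro x _
    rw [Matrix.mul_diagonal, Matrix.transpose_apply]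
    split <;> ring
  rw [hentry]
  have hl : (colSub Q j hj * (colSub Q j hj)ᵀ) i i'
      = ∑ x : Fin j, Q i ⟨x.1, lt_of_lt_of_le x.2 hj⟩ * Q i' ⟨x.1, lt_of_lt_of_le x.2 hj⟩ := by
    simp [colSub, Matrix.mul_apply]
  rw [hl, Finset.sum_ite, Finset.sum_const_zero, add_zero]
  apply Finset.sum_bij' (i := fun (x : Fin j) _ => (⟨x.1, lt_of_lt_of_le x.2 hj⟩ : Fin n))
    (j := fun (x : Fin n) hx => (⟨x.1, (Finset.mem_filter.mp hx).2⟩ : Fin j))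
  case' hi => intro a ha; exact Finset.mem_filter.mpr ⟨Finset.mem_univ _, a.2⟩
  case' hj => intro a ha; exact Finset.mem_univ _
  case' left_neg => intro a ha; rfl
  case' right_neg => intro a ha; rfl
  case' h => intro a ha; rfl

/-- the LSMR rank-`k` approximation to `AᵀA` is strictly more accurate than
the LSQR one: `‖AᵀA - Q_{k+1}Q_{k+1}ᵀ(AᵀA)Q_kQ_kᵀ‖ < ‖AᵀA - Q_kQ_kᵀ(AᵀA)Q_kQ_kᵀ‖`. -/
theorem lsmr_rank_k_approx_more_accurate_than_lsqr
    (m n : ℕ) (hn : 2 ≤ n) (hmn : n < m)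
    (A : Matrix (Fin m) (Fin n) ℝ)
    (P : Matrix (Fin m) (Fin (n + 1)) ℝ) (hP : Pᵀ * P = 1)
    (Q : Matrix (Fin n) (Fin n) ℝ) (hQ : Qᵀ * Q = 1)
    (α : Fin n → ℝ) (hα : ∀ i, 0 < α i)
    (β : Fin n → ℝ) (hβ : ∀ i, 0 < β i)
    (B : Matrix (Fin (n + 1)) (Fin n) ℝ)
    (hB : ∀ (i : Fin (n + 1)) (j : Fin n),
      B i j = if (i : ℕ) = (j : ℕ) then α j
        else if (i : ℕ) = (j : ℕ) + 1 then β j else 0)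
    (hA : A = P * B * Qᵀ)
    (σ : Fin n → ℝ) (hσpos : ∀ i, 0 < σ i)
    (hσstrict : ∀ i j : Fin n, i < j → σ j < σ i)
    (hσ : ∀ i : Fin n, σ i = singVal A ((i : ℕ) + 1))
    (k : ℕ) (hk1 : 1 ≤ k) (hk2 : k ≤ n - 1) :
    specNorm (Aᵀ * A -
        colSub Q (k + 1) (by omega) * (colSub Q (k + 1) (by omega))ᵀ * (Aᵀ * A) *
          (colSub Q k (by omega) * (colSub Q k (by omega))ᵀ)) <
      specNorm (Aᵀ * A -
        colSub Q k (by omega) * (colSub Q k (by omega))ᵀ * (Aᵀ * A) *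
          (colSub Q k (by omega) * (colSub Q k (by omega))ᵀ)) := by
  have hBent : ∀ (l : Fin (n + 1)) (i : Fin n), 0 ≤ B l i := by
    intro l i
    rw [hB]
    split_ifs with h1 h2
    · exact (hα i).le
    · exact (hβ i).le
    · exact le_refl _
  have hTent : ∀ i j : Fin n, (Bᵀ * B) i j = ∑ l : Fin (n+1), B l i * B l j := by
    intro i j
    rw [Matrix.mul_apply]
    apply Finset.sum_congr rfl
    intro l _
    rw [Matrix.transpose_apply]
  have hTsym : (Bᵀ * B)ᵀ = Bᵀ * B := by
    rw [Matrix.transpose_mul, Matrix.transpose_transpose]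
  have hTpos : ∀ i j : Fin n, 0 ≤ (Bᵀ * B) i j := by
    intro i j
    rw [hTent]
    exact Finset.sum_nonneg fun l _ => mul_nonneg (hBent l i) (hBent l j)
  have hTdiag : ∀ i : Fin n, 0 < (Bᵀ * B) i i := by
    intro i
    rw [hTent]
    have hmem : (⟨i.1, by omega⟩ : Fin (n+1)) ∈ Finset.univ := Finset.mem_univ _
    have hterm : B ⟨i.1, by omega⟩ i * B ⟨i.1, by omega⟩ i = α i * α i := by
      rw [hB]; simp
    have hsl := Finset.single_le_sum (f := fun l : Fin (n+1) => B l i * B l i)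
      (fun l _ => mul_nonneg (hBent l i) (hBent l i)) hmem
    rw [hterm] at hsl
    nlinarith [hα i]
  have hTsup : ∀ i j : Fin n, i.1 + 1 = j.1 → 0 < (Bᵀ * B) i j := by
    intro i j hij
    rw [hTent]
    have hjlt : j.1 < n + 1 := by omega
    have hterm : B ⟨j.1, hjlt⟩ i * B ⟨j.1, hjlt⟩ j = β i * α j := by
      rw [hB, hB]
      have h1 : j.1 ≠ i.1 := by omega
      simp [h1, hij.symm]
    have hsl := Finset.single_le_sum (f := fun l : Fin (n+1) => B l i * B l j)
      (fun l _ => mul_nonneg (hBent l i) (hBent l j)) (Finset.mem_univ (⟨j.1, hjlt⟩ : Fin (n+1)))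
    rw [hterm] at hsl
    nlinarith [mul_pos (hβ i) (hα j)]
  have hTzero : ∀ i j : Fin n, j.1 + 2 ≤ i.1 → (Bᵀ * B) i j = 0 := by
    intro i j hij
    rw [hTent]
    apply Finset.sum_eq_zero
    intro l _
    rw [hB, hB]
    split_ifs <;> first | omega | ring
  have hmid : ∀ X : Matrix (Fin n) (Fin n) ℝ, Qᵀ * (Q * X) = X := by
    intro X; rw [← Matrix.mul_assoc, hQ, Matrix.one_mul]
  have hmidP : ∀ X : Matrix (Fin (n+1)) (Fin n) ℝ, Pᵀ * (P * X) = X := by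
    intro X; rw [← Matrix.mul_assoc, hP, Matrix.one_mul]
  have hAA : Aᵀ * A = Q * (Bᵀ * B) * Qᵀ := by
    rw [hA]
    simp only [Matrix.transpose_mul, Matrix.transpose_transpose, Matrix.mul_assoc, hmidP]
  have hconj : ∀ Da Db : Matrix (Fin n) (Fin n) ℝ,
      (Q * Da * Qᵀ) * (Q * (Bᵀ * B) * Qᵀ) * (Q * Db * Qᵀ) = Q * (Da * (Bᵀ * B) * Db) * Qᵀ := by
    intro Da Db
    simp only [Matrix.mul_assoc, hmid]
  have hsub : ∀ X Y : Matrix (Fin n) (Fin n) ℝ,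
      Q * X * Qᵀ - Q * Y * Qᵀ = Q * (X - Y) * Qᵀ := by
    intro X Y
    rw [Matrix.mul_sub, Matrix.sub_mul]
  rw [colSub_sq Q (k+1) (by omega), colSub_sq Q k (by omega), hAA, hconj, hconj, hsub, hsub,
    specNorm_conj _ _ hQ, specNorm_conj _ _ hQ]
  exact key_ineq hn _ hTsym hTpos hTdiag hTsup hTzero k hk1 hk2
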